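/- For any graph G, h(G) ≤ ⌈χ_f(G)⌉, where h(G) is the smallest integer m ≥ 1 such that for every symmetric matrix Z with Zᵢⱼ = 0 for all ij ∉ E(G), λ₁(Z) + λₙ(Z) + ⋯ + λ_{n−m+2}(Z) ≤ 0, and χ_f(G) is the fractional chromatic number. -/

import Mathlib

/-- The `i`-th largest eigenvalue (0-indexed) of a real symmetric matrix; `0` if out of
range or not symmetric. -/
noncomputable def eigDesc {n : ℕ} (A : Matrix (Fin n) (Fin n) ℝ) : ℕ → ℝ :=
  fun i => if h : i < n ∧ A.IsHermitian then
    h.2.eigenvalues (Tuple.sort (fun j => -h.2.eigenvalues j) ⟨i, h.1⟩) else 0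

/-- `h(G)`: the smallest integer `m ≥ 1` such that for every symmetric matrix `Z`
supported on the edges of `G`, `λ₁(Z) + λₙ(Z) + ⋯ + λₙ₋ₘ₊₂(Z) ≤ 0`. -/
noncomputable def hParam {n : ℕ} (G : SimpleGraph (Fin n)) : ℕ :=
  sInf {m : ℕ | 1 ≤ m ∧ ∀ Z : Matrix (Fin n) (Fin n) ℝ, Z.IsSymm →
    (∀ i j, ¬ G.Adj i j → Z i j = 0) →
    eigDesc Z 0 + ∑ i ∈ Finset.range (m - 1), eigDesc Z (n - 1 - i) ≤ 0}

/-- The fractional chromatic number of `G`: the infimum of the total weight `𝟙ᵀy`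
over nonnegative fractional colourings `y` indexed by independent sets. -/
noncomputable def fracChrom {n : ℕ} (G : SimpleGraph (Fin n)) : ℝ :=
  sInf {t : ℝ | ∃ y : Finset (Fin n) → ℝ, (∀ S, 0 ≤ y S) ∧
    (∀ S, y S ≠ 0 → ∀ u ∈ S, ∀ v ∈ S, ¬ G.Adj u v) ∧
    (∀ v, 1 ≤ ∑ S ∈ Finset.univ.filter (fun S => v ∈ S), y S) ∧
    t = ∑ S, y S}

private lemma eigDesc_eq {n : ℕ} (Z : Matrix (Fin n) (Fin n) ℝ) (hA : Z.IsHermitian)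
    (k : ℕ) (hk : k < n) :
    eigDesc Z k = hA.eigenvalues (Tuple.sort (fun j => -hA.eigenvalues j) ⟨k, hk⟩) := by
  show dite _ _ _ = _
  rw [dif_pos (⟨hk, hA⟩ : k < n ∧ Z.IsHermitian)]

open Finset in
private lemma aux_key {n : ℕ} (hn : 0 < n) (G : SimpleGraph (Fin n))
    (Z : Matrix (Fin n) (Fin n) ℝ) (hA : Z.IsHermitian)
    (hsupp : ∀ i j, ¬ G.Adj i j → Z i j = 0)
    (y : Finset (Fin n) → ℝ) (hy0 : ∀ S, 0 ≤ y S)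
    (hind : ∀ S, y S ≠ 0 → ∀ u ∈ S, ∀ v ∈ S, ¬ G.Adj u v)
    (hcov : ∀ v, 1 ≤ ∑ S ∈ Finset.univ.filter (fun S => v ∈ S), y S)
    (M : ℕ) (hM1 : 1 ≤ M) (hMn : M ≤ n) (δ : ℝ) (hδ : 0 ≤ δ)
    (htM : ∑ S, y S ≤ M + δ) :
    eigDesc Z 0 + ∑ i ∈ Finset.range (M - 1), eigDesc Z (n - 1 - i)
      ≤ δ * (1 + |eigDesc Z (n - M)|) := by
  classical
  set lam : Fin n → ℝ := hA.eigenvalues with hlam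
  set σ : Equiv.Perm (Fin n) := Tuple.sort (fun j => -hA.eigenvalues j) with hσ
  set U : Matrix (Fin n) (Fin n) ℝ := (hA.eigenvectorUnitary : Matrix (Fin n) (Fin n) ℝ) with hU
  -- unitarity facts
  have hU1 : ∀ i j, ∑ a, U a i * U a j = if i = j then (1:ℝ) else 0 := by
    intro i j
    have h := Matrix.mem_unitaryGroup_iff'.mp (hA.eigenvectorUnitary).2
    have h2 := congrFun (congrFun h i) j
    simp only [Matrix.mul_apply, Matrix.star_apply, star_trivial, Matrix.one_apply] at h2
    exact h2
  have hU2 : ∀ a b, ∑ i, U a i * U b i = if a = b then (1:ℝ) else 0 := by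
    intro a b
    have h := Matrix.mem_unitaryGroup_iff.mp (hA.eigenvectorUnitary).2
    have h2 := congrFun (congrFun h a) b
    simp only [Matrix.mul_apply, Matrix.star_apply, star_trivial, Matrix.one_apply] at h2
    exact h2
  have hEig : ∀ i a, ∑ c, Z a c * U c i = lam i * U a i := by
    intro i a
    have h2 := congrFun (hA.mulVec_eigenvectorBasis i) a
    simp only [Matrix.mulVec, dotProduct, Pi.smul_apply, smul_eq_mul] at h2
    exact h2
  have hSD : ∀ a b, Z a b = ∑ i, lam i * (U a i * U b i) := by
    intro a b
    calc Z a b = ∑ c, Z a c * (if c = b then 1 else 0) := by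
          simp [mul_ite]
    _ = ∑ c, Z a c * (∑ i, U c i * U b i) :=
          Finset.sum_congr rfl fun c _ => by rw [hU2 c b]
    _ = ∑ c, ∑ i, Z a c * (U c i * U b i) :=
          Finset.sum_congr rfl fun c _ => by rw [Finset.mul_sum]
    _ = ∑ i, ∑ c, Z a c * (U c i * U b i) := Finset.sum_comm
    _ = ∑ i, (∑ c, Z a c * U c i) * U b i := by
          refine Finset.sum_congr rfl fun i _ => ?_
          rw [Finset.sum_mul]
          exact Finset.sum_congr rfl fun c _ => by ring
    _ = ∑ i, lam i * (U a i * U b i) := by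
          refine Finset.sum_congr rfl fun i _ => ?_
          rw [hEig i a]; ring
  have hdiag : ∀ a, Z a a = 0 := fun a => hsupp a a (G.irrefl)
  have htr : ∑ i, lam i = 0 := by
    have h0 : ∑ a, Z a a = 0 := by simp [hdiag]
    calc ∑ i, lam i = ∑ i, lam i * ∑ a, U a i * U a i := by
          refine Finset.sum_congr rfl fun i _ => ?_
          rw [hU1 i i]; simp
    _ = ∑ i, ∑ a, lam i * (U a i * U a i) :=
          Finset.sum_congr rfl fun i _ => by rw [Finset.mul_sum]
    _ = ∑ a, ∑ i, lam i * (U a i * U a i) := Finset.sum_comm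
    _ = ∑ a, Z a a := Finset.sum_congr rfl fun a _ => (hSD a a).symm
    _ = 0 := h0
  -- data from the fractional colouring
  set i0 : Fin n := σ ⟨0, hn⟩ with hi0
  set x : Fin n → ℝ := fun a => U a i0 with hx
  set w : Fin n → ℝ := fun a => ∑ S ∈ Finset.univ.filter (fun S => a ∈ S), y S with hw
  have hw1 : ∀ a, 1 ≤ w a := hcov
  have hwpos : ∀ a, 0 < w a := fun a => lt_of_lt_of_le one_pos (hw1 a)
  set p : Finset (Fin n) → Fin n → ℝ := fun S a => if a ∈ S then x a / w a else 0 with hp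
  set ν : Finset (Fin n) → ℝ := fun S => ∑ a ∈ S, x a ^ 2 / w a with hν
  have hν0 : ∀ S, 0 ≤ ν S :=
    fun S => Finset.sum_nonneg fun a _ => div_nonneg (sq_nonneg _) (hwpos a).le
  set SS : Finset (Finset (Fin n)) := Finset.univ.filter (fun S => y S ≠ 0 ∧ ν S ≠ 0) with hSS
  have hνpos : ∀ S ∈ SS, 0 < ν S := by
    intro S hS
    rw [hSS, Finset.mem_filter] at hS
    exact lt_of_le_of_ne (hν0 S) (Ne.symm hS.2.2)
  set rep : (Fin n → ℝ) → Fin n → ℝ := fun u i => ∑ a, U a i * u a with hrep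
  set Ψ : Fin n → ℝ := fun i => ∑ S ∈ SS, y S * (rep (p S) i) ^ 2 / ν S with hΨ
  have hΨ0 : ∀ i, 0 ≤ Ψ i := by
    intro i
    refine Finset.sum_nonneg fun S hS => ?_
    exact div_nonneg (mul_nonneg (hy0 S) (sq_nonneg _)) (hνpos S hS).le
  set d : Fin n → ℝ := fun i => Ψ i - (rep x i) ^ 2 with hd
  -- generic double-sum swap
  have hswap : ∀ f : Fin n → ℝ, ∑ S, y S * ∑ a ∈ S, f a = ∑ a, f a * w a := by
    intro f
    calc ∑ S, y S * ∑ a ∈ S, f a = ∑ S, ∑ a, (if a ∈ S then y S * f a else 0) := by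
          refine Finset.sum_congr rfl fun S _ => ?_
          rw [Finset.mul_sum, Finset.sum_ite_mem, Finset.univ_inter]
    _ = ∑ a, ∑ S, (if a ∈ S then y S * f a else 0) := Finset.sum_comm
    _ = ∑ a, ∑ S ∈ Finset.univ.filter (fun S => a ∈ S), y S * f a := by
          refine Finset.sum_congr rfl fun a _ => ?_
          rw [Finset.sum_filter]
    _ = ∑ a, f a * w a := by
          refine Finset.sum_congr rfl fun a _ => ?_
          show _ = f a * ∑ S ∈ Finset.univ.filter (fun S => a ∈ S), y S
          rw [Finset.mul_sum]
          exact Finset.sum_congr rfl fun S _ => by ring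
  -- expansion helper
  have hexp : ∀ (c u : Fin n → ℝ),
      ∑ i, c i * (rep u i) ^ 2
        = ∑ a, ∑ b, (u a * u b) * (∑ i, c i * (U a i * U b i)) := by
    intro c u
    calc ∑ i, c i * (rep u i) ^ 2
        = ∑ i, ∑ a, ∑ b, (u a * u b) * (c i * (U a i * U b i)) := by
          refine Finset.sum_congr rfl fun i _ => ?_
          simp only [hrep]
          rw [sq, Finset.sum_mul_sum Finset.univ Finset.univ
            (fun a => U a i * u a) (fun b => U b i * u b), Finset.mul_sum]
          refine Finset.sum_congr rfl fun a _ => ?_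
          rw [Finset.mul_sum]
          exact Finset.sum_congr rfl fun b _ => by ring
    _ = ∑ a, ∑ i, ∑ b, (u a * u b) * (c i * (U a i * U b i)) := Finset.sum_comm
    _ = ∑ a, ∑ b, ∑ i, (u a * u b) * (c i * (U a i * U b i)) :=
          Finset.sum_congr rfl fun a _ => Finset.sum_comm
    _ = ∑ a, ∑ b, (u a * u b) * (∑ i, c i * (U a i * U b i)) := by
          refine Finset.sum_congr rfl fun a _ => Finset.sum_congr rfl fun b _ => ?_
          rw [Finset.mul_sum]
  have hPars : ∀ u : Fin n → ℝ, ∑ i, (rep u i) ^ 2 = ∑ a, (u a) ^ 2 := by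
    intro u
    have h := hexp (fun _ => 1) u
    simp only [one_mul] at h
    rw [h]
    calc ∑ a, ∑ b, (u a * u b) * (∑ i, U a i * U b i)
        = ∑ a, ∑ b, (u a * u b) * (if a = b then (1:ℝ) else 0) := by
          refine Finset.sum_congr rfl fun a _ => Finset.sum_congr rfl fun b _ => ?_
          rw [hU2 a b]
    _ = ∑ a, (u a) ^ 2 := by
          refine Finset.sum_congr rfl fun a _ => ?_
          simp [mul_ite, sq]
  have hQF : ∀ u : Fin n → ℝ,
      ∑ i, lam i * (rep u i) ^ 2 = ∑ a, ∑ b, (u a * u b) * Z a b := by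
    intro u
    rw [hexp lam u]
    refine Finset.sum_congr rfl fun a _ => Finset.sum_congr rfl fun b _ => ?_
    rw [← hSD a b]
  -- facts about x
  have hxrep : ∀ i, rep x i = if i = i0 then (1:ℝ) else 0 := fun i => hU1 i i0
  have hx2 : ∑ a, x a ^ 2 = 1 := by
    have h := hU1 i0 i0
    simp only [if_pos] at h
    rw [← h]
    exact Finset.sum_congr rfl fun a _ => sq (x a)
  have hxrep2 : ∑ i, (rep x i) ^ 2 = 1 := by
    rw [hPars x]; exact hx2
  -- decomposition of x as a weighted sum of pieces
  have hp0 : ∀ S, ν S = 0 → ∀ a, p S a = 0 := by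
    intro S hS0 a
    show (if a ∈ S then x a / w a else 0) = 0
    split_ifs with ha
    · have hz : x a ^ 2 / w a = 0 := by
        have := (Finset.sum_eq_zero_iff_of_nonneg
          (fun b _ => div_nonneg (sq_nonneg (x b)) (hwpos b).le)).mp hS0 a ha
        exact this
      have : x a ^ 2 = 0 := by
        rw [div_eq_zero_iff, pow_eq_zero_iff (by norm_num)] at hz
        rcases hz with h | h
        · exact (pow_eq_zero_iff (by norm_num)).mpr h
        · exact absurd h (hwpos a).ne'
      have hxa : x a = 0 := by
        exact pow_eq_zero_iff (by norm_num) |>.mp this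
      rw [hxa, zero_div]
    · rfl
  have hdecomp : ∀ a, ∑ S, y S * p S a = x a := by
    intro a
    calc ∑ S, y S * p S a
        = ∑ S, (if a ∈ S then y S * (x a / w a) else 0) := by
          refine Finset.sum_congr rfl fun S _ => ?_
          show y S * (if a ∈ S then x a / w a else 0) = _
          split_ifs with h <;> simp
    _ = ∑ S ∈ Finset.univ.filter (fun S => a ∈ S), y S * (x a / w a) := by
          rw [Finset.sum_filter]
    _ = (∑ S ∈ Finset.univ.filter (fun S => a ∈ S), y S) * (x a / w a) := by
          rw [Finset.sum_mul]
    _ = w a * (x a / w a) := rfl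
    _ = x a := by
          rw [mul_comm, div_mul_cancel₀ _ (hwpos a).ne']
  have hdecompSS : ∀ i, rep x i = ∑ S ∈ SS, y S * rep (p S) i := by
    intro i
    have h1 : rep x i = ∑ S, y S * rep (p S) i := by
      calc rep x i = ∑ a, U a i * x a := rfl
      _ = ∑ a, U a i * ∑ S, y S * p S a := by
          refine Finset.sum_congr rfl fun a _ => ?_
          rw [hdecomp a]
      _ = ∑ a, ∑ S, U a i * (y S * p S a) := by
          refine Finset.sum_congr rfl fun a _ => ?_
          rw [Finset.mul_sum]
      _ = ∑ S, ∑ a, U a i * (y S * p S a) := Finset.sum_comm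
      _ = ∑ S, y S * rep (p S) i := by
          refine Finset.sum_congr rfl fun S _ => ?_
          show _ = y S * ∑ a, U a i * p S a
          rw [Finset.mul_sum]
          exact Finset.sum_congr rfl fun a _ => by ring
    rw [h1, ← Finset.sum_filter_add_sum_filter_not Finset.univ
      (fun S => y S ≠ 0 ∧ ν S ≠ 0) (fun S => y S * rep (p S) i)]
    have h2 : ∑ S ∈ Finset.univ.filter (fun S => ¬(y S ≠ 0 ∧ ν S ≠ 0)),
        y S * rep (p S) i = 0 := by
      refine Finset.sum_eq_zero fun S hS => ?_
      rw [Finset.mem_filter] at hS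
      rcases not_and_or.mp hS.2 with h | h
      · rw [not_not.mp h, zero_mul]
      · have : rep (p S) i = 0 := by
          show ∑ a, U a i * p S a = 0
          refine Finset.sum_eq_zero fun a _ => ?_
          rw [hp0 S (not_not.mp h) a, mul_zero]
        rw [this, mul_zero]
    rw [h2, add_zero]
  -- total mass bound
  have hall : ∑ S, y S * ν S = 1 := by
    have := hswap (fun a => x a ^ 2 / w a)
    rw [this]
    calc ∑ a, x a ^ 2 / w a * w a = ∑ a, x a ^ 2 := by
          refine Finset.sum_congr rfl fun a _ => ?_
          rw [div_mul_cancel₀ _ (hwpos a).ne']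
    _ = 1 := hx2
  have hsumyν : ∑ S ∈ SS, y S * ν S ≤ 1 := by
    rw [← hall]
    refine Finset.sum_le_sum_of_subset_of_nonneg (Finset.filter_subset _ _) ?_
    intro S _ _
    exact mul_nonneg (hy0 S) (hν0 S)
  -- Q = Ψ - xxᵀ is between 0 and 1 in the eigenbasis
  have hpsb : ∀ i, (rep x i) ^ 2 ≤ Ψ i := by
    intro i
    have hCS := Finset.sum_sq_le_sum_mul_sum_of_sq_eq_mul SS
      (r := fun S => y S * rep (p S) i)
      (f := fun S => y S * ν S)
      (g := fun S => y S * (rep (p S) i) ^ 2 / ν S)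
      (fun S hS => mul_nonneg (hy0 S) (hν0 S))
      (fun S hS => div_nonneg (mul_nonneg (hy0 S) (sq_nonneg _)) (hν0 S))
      (fun S hS => by
        have hν' := (hνpos S hS).ne'
        field_simp)
    rw [← hdecompSS i] at hCS
    calc (rep x i) ^ 2 ≤ (∑ S ∈ SS, y S * ν S) * Ψ i := hCS
    _ ≤ 1 * Ψ i := mul_le_mul_of_nonneg_right hsumyν (hΨ0 i)
    _ = Ψ i := one_mul _
  have hd0 : ∀ i, 0 ≤ d i := by
    intro i
    have := hpsb i
    show 0 ≤ Ψ i - (rep x i) ^ 2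
    linarith
  have hrepS : ∀ S i, rep (p S) i = ∑ a ∈ S, U a i * (x a / w a) := by
    intro S i
    show (∑ a, U a i * p S a) = _
    calc ∑ a, U a i * p S a
        = ∑ a, (if a ∈ S then U a i * (x a / w a) else 0) := by
          refine Finset.sum_congr rfl fun a _ => ?_
          show U a i * (if a ∈ S then x a / w a else 0) = _
          split_ifs <;> simp
    _ = ∑ a ∈ S, U a i * (x a / w a) := by
          rw [Finset.sum_ite_mem, Finset.univ_inter]
  have hΨ1 : ∀ i, Ψ i ≤ 1 := by
    intro i
    have hCS2 : ∀ S, (rep (p S) i) ^ 2 ≤ (∑ a ∈ S, U a i ^ 2 / w a) * ν S := by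
      intro S
      rw [hrepS S i]
      refine Finset.sum_sq_le_sum_mul_sum_of_sq_eq_mul S
        (r := fun a => U a i * (x a / w a))
        (f := fun a => U a i ^ 2 / w a)
        (g := fun a => x a ^ 2 / w a)
        (fun a _ => div_nonneg (sq_nonneg _) (hwpos a).le)
        (fun a _ => div_nonneg (sq_nonneg _) (hwpos a).le)
        (fun a _ => by
          have := (hwpos a).ne'
          field_simp)
    have hstep : ∀ S ∈ SS, y S * (rep (p S) i) ^ 2 / ν S ≤ y S * ∑ a ∈ S, U a i ^ 2 / w a := by
      intro S hS
      rw [div_le_iff₀ (hνpos S hS)]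
      calc y S * (rep (p S) i) ^ 2 ≤ y S * ((∑ a ∈ S, U a i ^ 2 / w a) * ν S) :=
            mul_le_mul_of_nonneg_left (hCS2 S) (hy0 S)
      _ = y S * (∑ a ∈ S, U a i ^ 2 / w a) * ν S := by ring
    calc Ψ i ≤ ∑ S ∈ SS, y S * ∑ a ∈ S, U a i ^ 2 / w a := Finset.sum_le_sum hstep
    _ ≤ ∑ S, y S * ∑ a ∈ S, U a i ^ 2 / w a := by
          refine Finset.sum_le_sum_of_subset_of_nonneg (Finset.filter_subset _ _) ?_
          intro S _ _
          exact mul_nonneg (hy0 S) (Finset.sum_nonneg fun a _ =>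
            div_nonneg (sq_nonneg _) (hwpos a).le)
    _ = ∑ a, U a i ^ 2 / w a * w a := hswap _
    _ = ∑ a, U a i ^ 2 := by
          refine Finset.sum_congr rfl fun a _ => ?_
          rw [div_mul_cancel₀ _ (hwpos a).ne']
    _ = 1 := by
          have h := hU1 i i
          simp only [if_pos] at h
          rw [← h]
          exact Finset.sum_congr rfl fun a _ => sq (U a i)
  have hd1 : ∀ i, d i ≤ 1 := by
    intro i
    show Ψ i - (rep x i) ^ 2 ≤ 1
    have := hΨ1 i
    have := sq_nonneg (rep x i)
    linarith
  -- trace bound : ∑ d ≤ t - 1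
  have hΨsum : ∑ i, Ψ i ≤ ∑ S, y S := by
    have hswapΨ : ∑ i, Ψ i = ∑ S ∈ SS, y S * (∑ a, (p S a) ^ 2) / ν S := by
      rw [hΨ]
      rw [Finset.sum_comm]
      refine Finset.sum_congr rfl fun S hS => ?_
      rw [← hPars (p S), Finset.mul_sum, Finset.sum_div]
    rw [hswapΨ]
    have hstep : ∀ S ∈ SS, y S * (∑ a, (p S a) ^ 2) / ν S ≤ y S := by
      intro S hS
      rw [div_le_iff₀ (hνpos S hS)]
      have hps : ∑ a, (p S a) ^ 2 ≤ ν S := by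
        calc ∑ a, (p S a) ^ 2 = ∑ a, (if a ∈ S then (x a / w a) ^ 2 else 0) := by
              refine Finset.sum_congr rfl fun a _ => ?_
              show (if a ∈ S then x a / w a else 0) ^ 2 = _
              split_ifs <;> simp
        _ = ∑ a ∈ S, (x a / w a) ^ 2 := by rw [Finset.sum_ite_mem, Finset.univ_inter]
        _ ≤ ∑ a ∈ S, x a ^ 2 / w a := by
              refine Finset.sum_le_sum fun a _ => ?_
              rw [div_pow]
              rw [div_le_div_iff₀ (pow_pos (hwpos a) 2) (hwpos a)]
              have hkey : 0 ≤ x a ^ 2 * w a * (w a - 1) :=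
                mul_nonneg (mul_nonneg (sq_nonneg _) (hwpos a).le) (by linarith [hw1 a])
              nlinarith [hkey]
        _ = ν S := rfl
      calc y S * (∑ a, (p S a) ^ 2) ≤ y S * ν S :=
            mul_le_mul_of_nonneg_left hps (hy0 S)
      _ = y S * ν S := rfl
    calc ∑ S ∈ SS, y S * (∑ a, (p S a) ^ 2) / ν S ≤ ∑ S ∈ SS, y S := Finset.sum_le_sum hstep
    _ ≤ ∑ S, y S := Finset.sum_le_sum_of_subset_of_nonneg (Finset.filter_subset _ _)
          (fun S _ _ => hy0 S)
  have hdsum : ∑ i, d i ≤ (∑ S, y S) - 1 := by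
    have : ∑ i, d i = (∑ i, Ψ i) - ∑ i, (rep x i) ^ 2 := by
      show ∑ i, (Ψ i - (rep x i) ^ 2) = _
      rw [Finset.sum_sub_distrib]
    rw [this, hxrep2]
    have := hΨsum
    linarith
  -- energy identity : ∑ lam * d = - lam i0
  have hQFp : ∀ S ∈ SS, ∑ a, ∑ b, (p S a * p S b) * Z a b = 0 := by
    intro S hS
    rw [hSS, Finset.mem_filter] at hS
    refine Finset.sum_eq_zero fun a _ => Finset.sum_eq_zero fun b _ => ?_
    by_cases ha : a ∈ S
    · by_cases hb : b ∈ S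
      · have hZ : Z a b = 0 := hsupp a b (hind S hS.2.1 a ha b hb)
        rw [hZ, mul_zero]
      · have : p S b = 0 := by show (if b ∈ S then _ else 0) = 0; rw [if_neg hb]
        rw [this, mul_zero, zero_mul]
    · have : p S a = 0 := by show (if a ∈ S then _ else 0) = 0; rw [if_neg ha]
      rw [this, zero_mul, zero_mul]
  have hdlam : ∑ i, lam i * d i = - lam i0 := by
    have h1 : ∑ i, lam i * Ψ i = 0 := by
      have hswapl : ∑ i, lam i * Ψ i
          = ∑ S ∈ SS, y S * (∑ i, lam i * (rep (p S) i) ^ 2) / ν S := by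
        rw [hΨ]
        have : ∀ i, lam i * ∑ S ∈ SS, y S * (rep (p S) i) ^ 2 / ν S
            = ∑ S ∈ SS, y S * (lam i * (rep (p S) i) ^ 2) / ν S := by
          intro i
          rw [Finset.mul_sum]
          exact Finset.sum_congr rfl fun S _ => by ring
        calc ∑ i, lam i * ∑ S ∈ SS, y S * (rep (p S) i) ^ 2 / ν S
            = ∑ i, ∑ S ∈ SS, y S * (lam i * (rep (p S) i) ^ 2) / ν S :=
              Finset.sum_congr rfl fun i _ => this i
        _ = ∑ S ∈ SS, ∑ i, y S * (lam i * (rep (p S) i) ^ 2) / ν S := Finset.sum_comm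
        _ = ∑ S ∈ SS, y S * (∑ i, lam i * (rep (p S) i) ^ 2) / ν S := by
              refine Finset.sum_congr rfl fun S _ => ?_
              rw [Finset.mul_sum, Finset.sum_div]
      rw [hswapl]
      refine Finset.sum_eq_zero fun S hS => ?_
      rw [hQF (p S), hQFp S hS, mul_zero, zero_div]
    have h2 : ∑ i, lam i * (rep x i) ^ 2 = lam i0 := by
      calc ∑ i, lam i * (rep x i) ^ 2
          = ∑ i, lam i * (if i = i0 then (1:ℝ) else 0) ^ 2 := by
            refine Finset.sum_congr rfl fun i _ => ?_
            rw [hxrep i]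
      _ = lam i0 := by
            simp [mul_ite]
    calc ∑ i, lam i * d i = ∑ i, (lam i * Ψ i - lam i * (rep x i) ^ 2) := by
          refine Finset.sum_congr rfl fun i _ => ?_
          show lam i * (Ψ i - (rep x i) ^ 2) = _
          ring
    _ = (∑ i, lam i * Ψ i) - ∑ i, lam i * (rep x i) ^ 2 := Finset.sum_sub_distrib _ _
    _ = - lam i0 := by rw [h1, h2]; ring
  -- sorted eigenvalues
  set μ : Fin n → ℝ := fun j => lam (σ j) with hμ
  have hanti : ∀ j k : Fin n, j ≤ k → μ k ≤ μ j := by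
    intro j k hjk
    have h := Tuple.monotone_sort (fun j => -hA.eigenvalues j) hjk
    simp only [Function.comp_apply] at h
    show lam (σ k) ≤ lam (σ j)
    have h' : -lam (σ j) ≤ -lam (σ k) := h
    linarith
  have hperm : ∀ f : Fin n → ℝ, ∑ j, f (σ j) = ∑ i, f i := fun f => Equiv.sum_comp σ f
  have hED : ∀ (k : ℕ) (hk : k < n), eigDesc Z k = μ ⟨k, hk⟩ := by
    intro k hk
    rw [eigDesc_eq Z hA k hk]
  set dd : Fin n → ℝ := fun j => d (σ j) with hdd
  have hdd0 : ∀ j, 0 ≤ dd j := fun j => hd0 _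
  have hdd1 : ∀ j, dd j ≤ 1 := fun j => hd1 _
  have hμsum0 : ∑ j, μ j = 0 := (hperm lam).trans htr
  have hμd : ∑ j, μ j * dd j = - μ ⟨0, hn⟩ := by
    have h := hperm (fun i => lam i * d i)
    calc ∑ j, μ j * dd j = ∑ i, lam i * d i := h
    _ = - lam i0 := hdlam
    _ = - μ ⟨0, hn⟩ := rfl
  have hssum : ∑ j, dd j ≤ (M:ℝ) - 1 + δ := by
    have h := hperm d
    have h2 : ∑ i, d i ≤ (∑ S, y S) - 1 := hdsum
    calc ∑ j, dd j = ∑ i, d i := h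
    _ ≤ (∑ S, y S) - 1 := h2
    _ ≤ (M:ℝ) + δ - 1 := by linarith [htM]
    _ = (M:ℝ) - 1 + δ := by ring
  -- bottom index set
  have hn1 : ∀ i : ℕ, n - 1 - i < n := fun i => by omega
  have hnM : n - M < n := by omega
  set B : Finset (Fin n) := Finset.univ.filter (fun j => n - M < j.val) with hB
  have hreB : ∑ i ∈ Finset.range (M - 1), eigDesc Z (n - 1 - i) = ∑ j ∈ B, μ j := by
    refine Finset.sum_nbij' (i := fun i => (⟨n - 1 - i, hn1 i⟩ : Fin n))
      (j := fun j => n - 1 - (j : Fin n).val) ?_ ?_ ?_ ?_ ?_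
    · intro a ha
      rw [Finset.mem_range] at ha
      rw [hB, Finset.mem_filter]
      refine ⟨Finset.mem_univ _, ?_⟩
      show n - M < n - 1 - a
      omega
    · intro j hj
      rw [hB, Finset.mem_filter] at hj
      rw [Finset.mem_range]
      show n - 1 - j.val < M - 1
      have h1 := j.isLt
      have h2 := hj.2
      omega
    · intro a ha
      rw [Finset.mem_range] at ha
      show n - 1 - (n - 1 - a) = a
      omega
    · intro j hj
      rw [hB, Finset.mem_filter] at hj
      have h1 := j.isLt
      have h2 := hj.2
      ext
      show n - 1 - (n - 1 - j.val) = j.val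
      omega
    · intro a ha
      rw [Finset.mem_range] at ha
      exact hED (n - 1 - a) (hn1 a)
  have hBcard : B.card = M - 1 := by
    have h : B.card = (Finset.range (M - 1)).card := by
      refine Finset.card_nbij' (i := fun j => n - 1 - (j : Fin n).val)
        (j := fun i => (⟨n - 1 - i, hn1 i⟩ : Fin n)) ?_ ?_ ?_ ?_
      · intro j hj
        rw [hB, Finset.mem_coe, Finset.mem_filter] at hj
        rw [Finset.mem_coe, Finset.mem_range]
        show n - 1 - j.val < M - 1
        have h1 := j.isLt
        have h2 := hj.2
        omega
      · intro a ha
        rw [Finset.mem_coe, Finset.mem_range] at ha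
        rw [hB, Finset.mem_coe, Finset.mem_filter]
        refine ⟨Finset.mem_univ _, ?_⟩
        show n - M < n - 1 - a
        omega
      · intro j hj
        rw [hB, Finset.mem_coe, Finset.mem_filter] at hj
        have h1 := j.isLt
        have h2 := hj.2
        ext
        show n - 1 - (n - 1 - j.val) = j.val
        omega
      · intro a ha
        rw [Finset.mem_coe, Finset.mem_range] at ha
        show n - 1 - (n - 1 - a) = a
        omega
    rw [h, Finset.card_range]
  set C : Finset (Fin n) := Finset.univ.filter (fun j => ¬ (n - M < j.val)) with hC
  have hsplit : ∀ f : Fin n → ℝ, ∑ j ∈ B, f j + ∑ j ∈ C, f j = ∑ j, f j := by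
    intro f
    rw [hB, hC]
    exact Finset.sum_filter_add_sum_filter_not Finset.univ _ f
  set μs : ℝ := μ ⟨n - M, hnM⟩ with hμsdef
  rw [hED 0 hn, hreB, hED (n - M) hnM]
  show μ ⟨0, hn⟩ + ∑ j ∈ B, μ j ≤ δ * (1 + |μs|)
  by_cases hcase : μs ≤ 0
  · have h1 : 0 ≤ ∑ j ∈ C, (μ j - μs) * dd j := by
      refine Finset.sum_nonneg fun j hj => ?_
      rw [hC, Finset.mem_filter] at hj
      have hle : j ≤ (⟨n - M, hnM⟩ : Fin n) := by
        rw [Fin.le_def]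
        have := hj.2
        simpa using by omega
      have hmm := hanti j ⟨n - M, hnM⟩ hle
      exact mul_nonneg (by linarith) (hdd0 j)
    have h2 : 0 ≤ ∑ j ∈ B, (μs - μ j) * (1 - dd j) := by
      refine Finset.sum_nonneg fun j hj => ?_
      rw [hB, Finset.mem_filter] at hj
      have hle : (⟨n - M, hnM⟩ : Fin n) ≤ j := by
        rw [Fin.le_def]
        have := hj.2
        simpa using by omega
      have hmm := hanti ⟨n - M, hnM⟩ j hle
      exact mul_nonneg (by linarith) (by linarith [hdd1 j])
    have e1 : ∑ j ∈ C, (μ j - μs) * dd j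
        = (∑ j ∈ C, μ j * dd j) - μs * ∑ j ∈ C, dd j := by
      rw [Finset.mul_sum, ← Finset.sum_sub_distrib]
      exact Finset.sum_congr rfl fun j _ => by ring
    have hconst : ∑ _j ∈ B, μs = ((M:ℝ) - 1) * μs := by
      rw [Finset.sum_const, hBcard, nsmul_eq_mul, Nat.cast_sub hM1, Nat.cast_one]
    have e2 : ∑ j ∈ B, (μs - μ j) * (1 - dd j)
        = ((M:ℝ) - 1) * μs - μs * (∑ j ∈ B, dd j) - (∑ j ∈ B, μ j)
            + ∑ j ∈ B, μ j * dd j := by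
      calc ∑ j ∈ B, (μs - μ j) * (1 - dd j)
          = ∑ j ∈ B, (μs - μs * dd j - μ j + μ j * dd j) :=
            Finset.sum_congr rfl fun j _ => by ring
      _ = ((∑ _j ∈ B, μs) - (∑ j ∈ B, μs * dd j) - (∑ j ∈ B, μ j))
            + ∑ j ∈ B, μ j * dd j := by
            rw [Finset.sum_add_distrib, Finset.sum_sub_distrib, Finset.sum_sub_distrib]
      _ = ((M:ℝ) - 1) * μs - μs * (∑ j ∈ B, dd j) - (∑ j ∈ B, μ j)
            + ∑ j ∈ B, μ j * dd j := by
            rw [hconst, ← Finset.mul_sum]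
    have s1 := hsplit (fun j => μ j * dd j)
    have s2 := hsplit dd
    rw [e1] at h1
    rw [e2] at h2
    have hBd : ∑ j ∈ B, μ j ≤ (∑ j, μ j * dd j) - μs * ((∑ j, dd j) - ((M:ℝ) - 1)) := by
      have expand : μs * ((∑ j, dd j) - ((M:ℝ) - 1))
          = μs * (∑ j ∈ B, dd j) + μs * (∑ j ∈ C, dd j) - μs * ((M:ℝ) - 1) := by
        rw [← s2]; ring
      linarith [h1, h2, s1, expand]
    have habs : -μs = |μs| := (abs_of_nonpos hcase).symm
    have hs1 : (∑ j, dd j) - ((M:ℝ) - 1) ≤ δ := by linarith [hssum]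
    have hmul : -μs * ((∑ j, dd j) - ((M:ℝ) - 1)) ≤ -μs * δ :=
      mul_le_mul_of_nonneg_left hs1 (by linarith)
    calc μ ⟨0, hn⟩ + ∑ j ∈ B, μ j
        ≤ μ ⟨0, hn⟩ + ((∑ j, μ j * dd j) - μs * ((∑ j, dd j) - ((M:ℝ) - 1))) := by
          linarith [hBd]
    _ = - μs * ((∑ j, dd j) - ((M:ℝ) - 1)) := by rw [hμd]; ring
    _ ≤ -μs * δ := hmul
    _ = δ * |μs| := by rw [← habs]; ring
    _ ≤ δ * (1 + |μs|) :=
          mul_le_mul_of_nonneg_left (by linarith [abs_nonneg μs]) hδ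
  · rw [not_le] at hcase
    have hz0 : (⟨0, hn⟩ : Fin n) ∈ C := by
      rw [hC, Finset.mem_filter]
      refine ⟨Finset.mem_univ _, ?_⟩
      show ¬ (n - M < 0)
      omega
    have hCsum : μ ⟨0, hn⟩ + ∑ j ∈ C.erase ⟨0, hn⟩, μ j = ∑ j ∈ C, μ j :=
      Finset.add_sum_erase C μ hz0
    have hCpos : 0 ≤ ∑ j ∈ C.erase ⟨0, hn⟩, μ j := by
      refine Finset.sum_nonneg fun j hj => ?_
      have hjC := Finset.mem_of_mem_erase hj
      rw [hC, Finset.mem_filter] at hjC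
      have hle : j ≤ (⟨n - M, hnM⟩ : Fin n) := by
        rw [Fin.le_def]
        have := hjC.2
        simpa using by omega
      have := hanti j ⟨n - M, hnM⟩ hle
      linarith
    have s3 := hsplit μ
    have hrhs : 0 ≤ δ * (1 + |μs|) := mul_nonneg hδ (by positivity)
    linarith [hCsum, hCpos, s3, hμsum0, hrhs]

/-- Theorem 4 of the paper: `h(G) ≤ ⌈χ_f(G)⌉`. -/
theorem stmt16 {n : ℕ} (hn : 0 < n) (G : SimpleGraph (Fin n)) :
    (hParam G : ℤ) ≤ ⌈fracChrom G⌉ := by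
  classical
  set T : Set ℝ := {t : ℝ | ∃ y : Finset (Fin n) → ℝ, (∀ S, 0 ≤ y S) ∧
    (∀ S, y S ≠ 0 → ∀ u ∈ S, ∀ v ∈ S, ¬ G.Adj u v) ∧
    (∀ v, 1 ≤ ∑ S ∈ Finset.univ.filter (fun S => v ∈ S), y S) ∧
    t = ∑ S, y S} with hT
  have hfc : fracChrom G = sInf T := rfl
  have hwit : (n : ℝ) ∈ T := by
    refine ⟨fun S => if S.card = 1 then 1 else 0, ?_, ?_, ?_, ?_⟩
    · intro S
      show (0:ℝ) ≤ if S.card = 1 then 1 else 0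
      split_ifs <;> norm_num
    · intro S hS u hu v hv
      by_cases h1 : S.card = 1
      · obtain ⟨a, rfl⟩ := Finset.card_eq_one.mp h1
        rw [Finset.mem_singleton] at hu hv
        rw [hu, hv]
        exact G.irrefl
      · exact absurd (if_neg h1) hS
    · intro v
      have hfil : (Finset.univ.filter (fun S => v ∈ S)).filter
          (fun S : Finset (Fin n) => S.card = 1) = {({v} : Finset (Fin n))} := by
        ext S
        simp only [Finset.mem_filter, Finset.mem_univ, true_and, Finset.mem_singleton]
        constructor
        · rintro ⟨hv, hc⟩
          obtain ⟨a, rfl⟩ := Finset.card_eq_one.mp hc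
          rw [Finset.mem_singleton] at hv
          rw [hv]
        · rintro rfl
          exact ⟨Finset.mem_singleton_self v, Finset.card_singleton v⟩
      rw [Finset.sum_boole, hfil, Finset.card_singleton]
      norm_num
    · symm
      have hfil2 : Finset.univ.filter (fun S : Finset (Fin n) => S.card = 1)
          = Finset.univ.image (fun v : Fin n => ({v} : Finset (Fin n))) := by
        ext S
        simp only [Finset.mem_filter, Finset.mem_univ, true_and, Finset.mem_image]
        constructor
        · intro hc
          obtain ⟨a, rfl⟩ := Finset.card_eq_one.mp hc
          exact ⟨a, rfl⟩
        · rintro ⟨a, _, rfl⟩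
          exact Finset.card_singleton a
      rw [Finset.sum_boole, hfil2,
        Finset.card_image_of_injective _ Finset.singleton_injective,
        Finset.card_univ, Fintype.card_fin]
  have hne : T.Nonempty := ⟨n, hwit⟩
  have hlb : ∀ t ∈ T, (1:ℝ) ≤ t := by
    rintro t ⟨y, hy0, hind, hcov, rfl⟩
    calc (1:ℝ) ≤ ∑ S ∈ Finset.univ.filter (fun S => (⟨0, hn⟩ : Fin n) ∈ S), y S := hcov _
    _ ≤ ∑ S, y S := Finset.sum_le_sum_of_subset_of_nonneg (Finset.filter_subset _ _)
          (fun S _ _ => hy0 S)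
  have hbdd : BddBelow T := ⟨1, hlb⟩
  have hc1 : (1:ℝ) ≤ sInf T := le_csInf hne hlb
  have hcn : sInf T ≤ (n:ℝ) := csInf_le hbdd hwit
  have hceil1 : (1:ℤ) ≤ ⌈sInf T⌉ := by
    have h := Int.ceil_le_ceil hc1
    rwa [Int.ceil_one] at h
  set M : ℕ := (⌈sInf T⌉).toNat with hM
  have hMceil : (M : ℤ) = ⌈sInf T⌉ := Int.toNat_of_nonneg (le_trans zero_le_one hceil1)
  have hM1 : 1 ≤ M := by omega
  have hMn : M ≤ n := by
    have hint : ⌈sInf T⌉ ≤ (n:ℤ) := by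
      rw [Int.ceil_le]
      exact_mod_cast hcn
    omega
  have hMreal : sInf T ≤ (M:ℝ) := by
    have h := Int.le_ceil (sInf T)
    calc sInf T ≤ (⌈sInf T⌉ : ℝ) := h
    _ = (M:ℝ) := by exact_mod_cast hMceil.symm
  have hmem : M ∈ {m : ℕ | 1 ≤ m ∧ ∀ Z : Matrix (Fin n) (Fin n) ℝ, Z.IsSymm →
      (∀ i j, ¬ G.Adj i j → Z i j = 0) →
      eigDesc Z 0 + ∑ i ∈ Finset.range (m - 1), eigDesc Z (n - 1 - i) ≤ 0} := by
    refine ⟨hM1, ?_⟩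
    intro Z hsymm hsupp
    have hA : Z.IsHermitian := by
      show Z.conjTranspose = Z
      ext i j
      rw [Matrix.conjTranspose_apply, star_trivial]
      conv_rhs => rw [← hsymm]
      rfl
    by_contra hcon
    rw [not_le] at hcon
    set E := eigDesc Z 0 + ∑ i ∈ Finset.range (M - 1), eigDesc Z (n - 1 - i) with hE
    set K : ℝ := 1 + abs (eigDesc Z (n - M)) with hK
    have hKpos : 0 < K := by positivity
    set δ : ℝ := E / (2 * K) with hδdef
    have hδpos : 0 < δ := div_pos hcon (by linarith)
    obtain ⟨t, htT, htlt⟩ := (csInf_lt_iff hbdd hne).mp (lt_add_of_pos_right (sInf T) hδpos)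
    obtain ⟨y, hy0, hind, hcov, rfl⟩ := htT
    have htM : ∑ S, y S ≤ (M:ℝ) + δ := by linarith [hMreal]
    have hkey := aux_key hn G Z hA hsupp y hy0 hind hcov M hM1 hMn δ hδpos.le htM
    have hhalf : δ * K = E / 2 := by
      rw [hδdef]
      field_simp
    rw [← hK] at hkey
    rw [← hE] at hkey
    rw [hhalf] at hkey
    linarith [hkey, hcon]
  have hle : hParam G ≤ M := Nat.sInf_le hmem
  have hfin : (hParam G : ℤ) ≤ (M : ℤ) := by exact_mod_cast hle
  rw [hMceil] at hfin
  exact hfin
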